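/- Let T be a bounded linear operator on a complex Hilbert space. Then for all r ≥ 1 and all α ∈ [0,1], w(T)^{2r} ≤ (α/2) w(T²)^r + ‖(α/4)|T|^{2r} + (1 - 3α/4)|T*|^{2r}‖. -/

import Mathlib

open scoped NNReal
open ContinuousLinearMap RCLike

section Aux

variable {H : Type*} [NormedAddCommGroup H] [InnerProductSpace ℂ H]

local notation "⟪" x ", " y "⟫" => @inner ℂ _ _ x y

private lemma re_inner_real_smul' (r : ℝ) (u v : H) : re ⟪r • u, v⟫ = r * re ⟪u, v⟫ := by
  rw [RCLike.real_smul_eq_coe_smul (K := ℂ) r u, inner_smul_left]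
  simp [RCLike.conj_ofReal]

/-- Buzano's inequality. -/
private lemma buzano' (e a b : H) (he : ‖e‖ = 1) :
    ‖(⟪a, e⟫ * ⟪e, b⟫ : ℂ)‖ ≤ (‖a‖ * ‖b‖ + ‖(⟪a, b⟫ : ℂ)‖) / 2 := by
  set v : H := (2 * ⟪e, a⟫) • e - a with hv
  have hnv : ‖v‖ = ‖a‖ := by
    have h1 : ‖v‖^2 = ‖a‖^2 := by
      rw [hv, @norm_sub_sq ℂ]
      have h2 : ‖(2 * ⟪e, a⟫) • e‖ = 2 * ‖(⟪e, a⟫ : ℂ)‖ := by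
        rw [norm_smul, he]
        simp
      have h3 : re ⟪(2 * ⟪e, a⟫) • e, a⟫ = 2 * ‖(⟪e, a⟫ : ℂ)‖^2 := by
        simp [inner_smul_left, mul_assoc, RCLike.conj_mul]
        rw [show (⟪a, e⟫ : ℂ) = starRingEnd ℂ ⟪e, a⟫ from (inner_conj_symm a e).symm]
        simp only [Complex.conj_re, Complex.conj_im, Complex.sq_norm, Complex.normSq_apply]
        ring
      rw [h2, h3]
      ring
    nlinarith [norm_nonneg a, norm_nonneg v]
  have key : ‖(2 * ⟪a, e⟫ * ⟪e, b⟫ - ⟪a, b⟫ : ℂ)‖ ≤ ‖a‖ * ‖b‖ := by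
    have hvb : (⟪v, b⟫ : ℂ) = 2 * ⟪a, e⟫ * ⟪e, b⟫ - ⟪a, b⟫ := by
      rw [hv, inner_sub_left, inner_smul_left]
      rw [map_mul, map_ofNat, ← inner_conj_symm a e]
    calc ‖(2 * ⟪a, e⟫ * ⟪e, b⟫ - ⟪a, b⟫ : ℂ)‖ = ‖(⟪v, b⟫ : ℂ)‖ := by rw [hvb]
    _ ≤ ‖v‖ * ‖b‖ := norm_inner_le_norm v b
    _ = ‖a‖ * ‖b‖ := by rw [hnv]
  have tri : 2 * ‖(⟪a, e⟫ * ⟪e, b⟫ : ℂ)‖ - ‖(⟪a, b⟫ : ℂ)‖ ≤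
      ‖(2 * ⟪a, e⟫ * ⟪e, b⟫ - ⟪a, b⟫ : ℂ)‖ := by
    have h := norm_sub_norm_le (2 * ⟪a, e⟫ * ⟪e, b⟫ : ℂ) (⟪a, b⟫ : ℂ)
    calc 2 * ‖(⟪a, e⟫ * ⟪e, b⟫ : ℂ)‖ - ‖(⟪a, b⟫ : ℂ)‖
        = ‖(2 * (⟪a, e⟫ * ⟪e, b⟫) : ℂ)‖ - ‖(⟪a, b⟫ : ℂ)‖ := by
          rw [norm_mul]
          norm_num
    _ = ‖(2 * ⟪a, e⟫ * ⟪e, b⟫ : ℂ)‖ - ‖(⟪a, b⟫ : ℂ)‖ := by rw [mul_assoc]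
    _ ≤ _ := h
  linarith

private lemma avg_rpow' {c d : ℝ} (hc : 0 ≤ c) (hd : 0 ≤ d) {p : ℝ} (hp : 1 ≤ p) :
    ((c + d)/2) ^ p ≤ (c ^ p + d ^ p)/2 := by
  have h := NNReal.rpow_arith_mean_le_arith_mean2_rpow (1/2) (1/2) c.toNNReal d.toNNReal
    (by rw [← NNReal.coe_inj]; push_cast; norm_num) hp
  have h2 := NNReal.coe_le_coe.mpr h
  push_cast at h2
  rw [Real.coe_toNNReal _ hc, Real.coe_toNNReal _ hd] at h2
  rw [show (c + d)/2 = 1/2 * c + 1/2 * d by ring]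
  linarith

end Aux

section Hilbert

variable {H : Type*} [NormedAddCommGroup H] [InnerProductSpace ℂ H] [CompleteSpace H]

local notation "⟪" x ", " y "⟫" => @inner ℂ _ _ x y

private lemma inner_le_of_le' {A B : H →L[ℂ] H} (h : A ≤ B) (x : H) :
    re ⟪A x, x⟫ ≤ re ⟪B x, x⟫ := by
  have h2 := ((ContinuousLinearMap.le_def A B).mp h).inner_nonneg_left x
  simp only [reApplyInnerSelf_apply, sub_apply, inner_sub_left, map_sub] at h2
  have h3 := (RCLike.nonneg_iff.mp h2).1
  rw [map_sub] at h3
  linarith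

/-- McCarthy's inequality for a vector state. -/
private lemma mccarthy' (A : H →L[ℂ] H) (hA : 0 ≤ A) {s : ℝ} (hs : 1 ≤ s) {x : H}
    (hx : ‖x‖ = 1) : (re ⟪A x, x⟫) ^ s ≤ re ⟪(CFC.rpow A s) x, x⟫ := by
  rcases eq_or_lt_of_le hs with h1 | hs
  · rw [← h1, Real.rpow_one]
    have : CFC.rpow A (1:ℝ) = A := CFC.rpow_one A hA
    rw [this]
  set c : ℝ := re ⟪A x, x⟫ with hc
  have hc0 : 0 ≤ c := ((ContinuousLinearMap.nonneg_iff_isPositive A).mp hA).re_inner_nonneg_left x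
  have hconj : (Real.conjExponent s).HolderConjugate s :=
    (Real.HolderConjugate.conjExponent hs).symm
  set s' : ℝ := Real.conjExponent s with hs'
  have hs'pos : 0 < s' := hconj.pos
  have hspos : (0:ℝ) < s := by linarith
  set lam : ℝ≥0 := c.toNNReal ^ (s - 1) with hlam
  have hcont : ContinuousOn (fun t : ℝ≥0 => lam ^ s' / s'.toNNReal + s.toNNReal⁻¹ * t ^ s)
      (spectrum ℝ≥0 A) :=
    (continuous_const.add (continuous_const.mul
      (NNReal.continuous_rpow_const hspos.le))).continuousOn
  have hcont2 : ContinuousOn (fun t : ℝ≥0 => s.toNNReal⁻¹ * t ^ s) (spectrum ℝ≥0 A) :=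
    (continuous_const.mul (NNReal.continuous_rpow_const hspos.le)).continuousOn
  have hcont3 : ContinuousOn (fun t : ℝ≥0 => t ^ s) (spectrum ℝ≥0 A) :=
    (NNReal.continuous_rpow_const hspos.le).continuousOn
  have hyoung : ∀ t ∈ spectrum ℝ≥0 A, lam * t ≤ lam ^ s' / s'.toNNReal + s.toNNReal⁻¹ * t ^ s := by
    intro t _
    have h := NNReal.young_inequality_real lam t hconj
    rw [div_eq_inv_mul (t ^ s) s.toNNReal] at h
    exact h
  have hop : lam • A ≤ algebraMap ℝ≥0 (H →L[ℂ] H) (lam ^ s' / s'.toNNReal)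
      + s.toNNReal⁻¹ • CFC.rpow A s := by
    calc lam • A = cfc (fun t : ℝ≥0 => lam * t) A := (cfc_const_mul_id lam A hA).symm
    _ ≤ cfc (fun t : ℝ≥0 => lam ^ s' / s'.toNNReal + s.toNNReal⁻¹ * t ^ s) A :=
        cfc_mono hyoung (by fun_prop) hcont
    _ = _ := by
        rw [cfc_const_add _ _ A hcont2 hA, cfc_const_mul _ _ A hcont3]
        rfl
  have hineq := inner_le_of_le' hop x
  have hL : re ⟪(lam • A) x, x⟫ = (lam : ℝ) * c := by
    rw [smul_apply, NNReal.smul_def, re_inner_real_smul']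
  have hR : re ⟪(algebraMap ℝ≥0 (H →L[ℂ] H) (lam ^ s' / s'.toNNReal)
      + s.toNNReal⁻¹ • CFC.rpow A s) x, x⟫
      = ((lam ^ s' / s'.toNNReal : ℝ≥0) : ℝ)
        + ((s.toNNReal⁻¹ : ℝ≥0):ℝ) * re ⟪(CFC.rpow A s) x, x⟫ := by
    rw [add_apply, inner_add_left, map_add, Algebra.algebraMap_eq_smul_one]
    rw [smul_apply, NNReal.smul_def, re_inner_real_smul', smul_apply, NNReal.smul_def,
      re_inner_real_smul', ContinuousLinearMap.one_apply]
    have hxx : re ⟪x, x⟫ = 1 := by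
      rw [inner_self_eq_norm_sq_to_K]
      simp [hx]
    rw [hxx, mul_one]
  rw [hL, hR] at hineq
  have hlamc : (lam : ℝ) = c ^ (s - 1) := by
    rw [hlam, NNReal.coe_rpow, Real.coe_toNNReal _ hc0]
  have h1 : (lam:ℝ) * c = c ^ s := by
    rw [hlamc]
    calc c ^ (s-1) * c = c ^ (s-1) * c ^ (1:ℝ) := by rw [Real.rpow_one]
    _ = c ^ (s-1+1) := (Real.rpow_add' hc0 (by intro h; exact hspos.ne' (by linarith))).symm
    _ = c ^ s := by norm_num
  have h2 : ((lam ^ s' / s'.toNNReal : ℝ≥0) : ℝ) = c ^ s / s' := by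
    rw [NNReal.coe_div, NNReal.coe_rpow, hlamc, ← Real.rpow_mul hc0, Real.coe_toNNReal _ hs'pos.le]
    congr 2
    rw [hs', Real.conjExponent]
    have h4 : s - 1 ≠ 0 := by linarith
    field_simp
  have h3 : ((s.toNNReal⁻¹ : ℝ≥0):ℝ) = s⁻¹ := by
    rw [NNReal.coe_inv, Real.coe_toNNReal _ hspos.le]
  rw [h1, h2, h3] at hineq
  set g : ℝ := re ⟪(CFC.rpow A s) x, x⟫
  have hinv : s'⁻¹ + s⁻¹ = 1 := hconj.inv_add_inv_eq_one
  have key : c ^ s * s⁻¹ ≤ g * s⁻¹ := by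
    have e1 : c ^ s / s' = c ^ s * s'⁻¹ := div_eq_mul_inv _ _
    have e2 : s'⁻¹ = 1 - s⁻¹ := by linarith
    rw [e1, e2] at hineq
    nlinarith [hineq]
  have h5 := mul_le_mul_of_nonneg_right key hspos.le
  rw [mul_assoc, mul_assoc, inv_mul_cancel₀ hspos.ne', mul_one, mul_one] at h5
  exact h5

private lemma rpow_sqrt_op' (a : H →L[ℂ] H) (ha : 0 ≤ a) (r : ℝ) (hr : 0 ≤ r) :
    CFC.rpow (CFC.sqrt a) (2*r) = CFC.rpow a r := by
  have h2r : ((2*r).toNNReal : ℝ) = 2*r := Real.coe_toNNReal _ (by linarith)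
  have key := CFC.rpow_sqrt_nnreal (a := a) (x := (2*r).toNNReal) ha
  rw [h2r, show (2*r/2 : ℝ) = r from by ring] at key
  exact key

end Hilbert

open ContinuousLinearMap in
/-- The numerical radius `w(T) = sup { |⟨Tx,x⟩| : ‖x‖ = 1 }`. -/
noncomputable def numRad {H : Type*} [NormedAddCommGroup H] [InnerProductSpace ℂ H]
    (T : H →L[ℂ] H) : ℝ :=
  sSup {r : ℝ | ∃ x : H, ‖x‖ = 1 ∧ r = ‖(inner ℂ (T x) x : ℂ)‖}

/-- `|T| = (T^*T)^{1/2}`; note `absOp (adjoint T) = (TT^*)^{1/2} = |T^*|`. -/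
noncomputable def absOp {H : Type*} [NormedAddCommGroup H] [InnerProductSpace ℂ H]
    [CompleteSpace H] (T : H →L[ℂ] H) : H →L[ℂ] H :=
  CFC.sqrt (ContinuousLinearMap.adjoint T * T)

/-- Real powers of a (positive) operator via the continuous functional calculus. -/
noncomputable def opRPow {H : Type*} [NormedAddCommGroup H] [InnerProductSpace ℂ H]
    [CompleteSpace H] (A : H →L[ℂ] H) (r : ℝ) : H →L[ℂ] H :=
  CFC.rpow A r


section Ident

variable {H : Type*} [NormedAddCommGroup H] [InnerProductSpace ℂ H] [CompleteSpace H]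

local notation "⟪" x ", " y "⟫" => @inner ℂ _ _ x y

set_option maxHeartbeats 1600000 in
private lemma opRPow_absOp_eq (T : H →L[ℂ] H) (r : ℝ) (hr : 0 ≤ r) :
    opRPow (absOp T) (2 * r) = CFC.rpow (ContinuousLinearMap.adjoint T * T) r := by
  have hTT : (0 : H →L[ℂ] H) ≤ ContinuousLinearMap.adjoint T * T := by
    rw [← ContinuousLinearMap.star_eq_adjoint]
    exact star_mul_self_nonneg T
  unfold opRPow absOp
  exact rpow_sqrt_op' _ hTT r hr

set_option maxHeartbeats 1600000 in
/-- McCarthy bound specialised to `|T|^{2r}`. -/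
private lemma norm_rpow_le_inner (T : H →L[ℂ] H) {r : ℝ} (hr : 1 ≤ r) {x : H} (hx : ‖x‖ = 1) :
    ‖T x‖ ^ (2 * r) ≤ re ⟪opRPow (absOp T) (2 * r) x, x⟫ := by
  have hTT : (0 : H →L[ℂ] H) ≤ ContinuousLinearMap.adjoint T * T := by
    rw [← ContinuousLinearMap.star_eq_adjoint]
    exact star_mul_self_nonneg T
  have hn1sq : re ⟪(ContinuousLinearMap.adjoint T * T) x, x⟫ = ‖T x‖ ^ (2:ℕ) := by
    rw [ContinuousLinearMap.mul_apply, adjoint_inner_left, inner_self_eq_norm_sq_to_K]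
    norm_cast
  have hm := mccarthy' (ContinuousLinearMap.adjoint T * T) hTT hr hx
  rw [hn1sq, ← opRPow_absOp_eq T r (by linarith)] at hm
  have he : ‖T x‖ ^ (2 * r) = ((‖T x‖ : ℝ) ^ (2:ℕ)) ^ r := by
    rw [← Real.rpow_natCast ‖T x‖ 2, ← Real.rpow_mul (norm_nonneg _)]
    norm_num
  rw [he]
  exact hm

end Ident

section NumRadLemmas

variable {H : Type*} [NormedAddCommGroup H] [InnerProductSpace ℂ H]

local notation "⟪" x ", " y "⟫" => @inner ℂ _ _ x y

private lemma numRad_bdd (T : H →L[ℂ] H) :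
    BddAbove {r : ℝ | ∃ x : H, ‖x‖ = 1 ∧ r = ‖(⟪T x, x⟫ : ℂ)‖} := by
  refine ⟨‖T‖, fun z hz => ?_⟩
  obtain ⟨x, hx, rfl⟩ := hz
  calc ‖(⟪T x, x⟫ : ℂ)‖ ≤ ‖T x‖ * ‖x‖ := norm_inner_le_norm _ _
  _ ≤ ‖T‖ * ‖x‖ * ‖x‖ := by
      have := T.le_opNorm x
      nlinarith [norm_nonneg x]
  _ = ‖T‖ := by rw [hx]; ring

private lemma numRad_nonneg' (T : H →L[ℂ] H) : 0 ≤ numRad T :=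
  Real.sSup_nonneg (by rintro z ⟨x, hx, rfl⟩; exact norm_nonneg _)

private lemma le_numRad' (T : H →L[ℂ] H) {x : H} (hx : ‖x‖ = 1) :
    ‖(⟪T x, x⟫ : ℂ)‖ ≤ numRad T :=
  le_csSup (numRad_bdd T) ⟨x, hx, rfl⟩

private lemma numRad_le' (T : H →L[ℂ] H) {M : ℝ} (hM : 0 ≤ M)
    (h : ∀ x : H, ‖x‖ = 1 → ‖(⟪T x, x⟫ : ℂ)‖ ≤ M) : numRad T ≤ M :=
  Real.sSup_le (by rintro z ⟨x, hx, rfl⟩; exact h x hx) hM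

end NumRadLemmas

section Main

variable {H : Type*} [NormedAddCommGroup H] [InnerProductSpace ℂ H] [CompleteSpace H]

local notation "⟪" x ", " y "⟫" => @inner ℂ _ _ x y

set_option maxHeartbeats 1600000 in
private lemma pointwise_bound (T : H →L[ℂ] H) (r : ℝ) (hr : 1 ≤ r) (α : ℝ) (hα0 : 0 ≤ α)
    (hα1 : α ≤ 1) {x : H} (hx : ‖x‖ = 1) :
    ‖(⟪T x, x⟫ : ℂ)‖ ^ (2 * r) ≤
      (α / 2) * numRad (T * T) ^ r +
        ‖(α / 4) • opRPow (absOp T) (2 * r) +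
          (1 - 3 * α / 4) • opRPow (absOp (ContinuousLinearMap.adjoint T)) (2 * r)‖ := by
  set P := opRPow (absOp T) (2 * r) with hP
  set Q := opRPow (absOp (ContinuousLinearMap.adjoint T)) (2 * r) with hQ
  set p : ℝ := re ⟪P x, x⟫ with hp
  set q : ℝ := re ⟪Q x, x⟫ with hq
  set a : ℝ := ‖(⟪T x, x⟫ : ℂ)‖ with ha
  set n1 : ℝ := ‖T x‖ with hn1
  set n2 : ℝ := ‖ContinuousLinearMap.adjoint T x‖ with hn2
  set c : ℝ := ‖(⟪(T * T) x, x⟫ : ℂ)‖ with hcdef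
  -- inner product identities
  have hsym : (⟪x, ContinuousLinearMap.adjoint T x⟫ : ℂ) = ⟪T x, x⟫ := adjoint_inner_right T x x
  have hTsq : (⟪T x, ContinuousLinearMap.adjoint T x⟫ : ℂ) = ⟪(T * T) x, x⟫ := by
    rw [ContinuousLinearMap.mul_apply]
    exact adjoint_inner_right T (T x) x
  -- Buzano: a^2 ≤ (n1*n2 + c)/2
  have hbuz : a ^ (2:ℕ) ≤ (n1 * n2 + c) / 2 := by
    have h := buzano' x (T x) (ContinuousLinearMap.adjoint T x) hx
    rw [hsym, hTsq] at h
    calc a ^ (2:ℕ) = ‖((⟪T x, x⟫ : ℂ) * ⟪T x, x⟫)‖ := by rw [norm_mul, ha]; ring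
    _ ≤ (n1 * n2 + c) / 2 := h
  -- McCarthy applications
  have hF3a : n1 ^ (2 * r) ≤ p := norm_rpow_le_inner T hr hx
  have hF3b : n2 ^ (2 * r) ≤ q := norm_rpow_le_inner (ContinuousLinearMap.adjoint T) hr hx
  -- a ≤ n2
  have hF4 : a ≤ n2 := by
    rw [ha, ← hsym]
    calc ‖(⟪x, ContinuousLinearMap.adjoint T x⟫ : ℂ)‖ ≤ ‖x‖ * n2 := norm_inner_le_norm _ _
    _ = n2 := by rw [hx, one_mul]
  -- numerical radius bound
  have hF2 : c ≤ numRad (T * T) := le_numRad' (T * T) hx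
  have hw0 : 0 ≤ numRad (T * T) := numRad_nonneg' _
  -- norm bound for B
  set B := (α / 4) • P + (1 - 3 * α / 4) • Q with hB
  have hF5 : (α / 4) * p + (1 - 3 * α / 4) * q ≤ ‖B‖ := by
    have hBx : re ⟪B x, x⟫ = (α / 4) * p + (1 - 3 * α / 4) * q := by
      rw [hB, add_apply, inner_add_left, map_add, smul_apply, re_inner_real_smul',
        smul_apply, re_inner_real_smul']
    calc (α / 4) * p + (1 - 3 * α / 4) * q = re ⟪B x, x⟫ := hBx.symm
    _ ≤ ‖(⟪B x, x⟫ : ℂ)‖ := RCLike.re_le_norm _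
    _ ≤ ‖B x‖ * ‖x‖ := norm_inner_le_norm _ _
    _ ≤ (‖B‖ * ‖x‖) * ‖x‖ := by
        have := B.le_opNorm x
        nlinarith [norm_nonneg x]
    _ = ‖B‖ := by rw [hx]; ring
  -- arithmetic combination
  have ha0 : 0 ≤ a := norm_nonneg _
  have hc0 : 0 ≤ c := norm_nonneg _
  have hn10 : 0 ≤ n1 := norm_nonneg _
  have hn20 : 0 ≤ n2 := norm_nonneg _
  have haX : a ^ (2 * r) = (a ^ (2:ℕ)) ^ r := by
    rw [← Real.rpow_natCast a 2, ← Real.rpow_mul ha0]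
    norm_num
  have hq0 : a ^ (2 * r) ≤ q := by
    calc a ^ (2 * r) ≤ n2 ^ (2 * r) :=
          Real.rpow_le_rpow ha0 hF4 (by linarith)
    _ ≤ q := hF3b
  have hd : (n1 * n2) ^ r ≤ (p + q) / 2 := by
    have e1 : (n1 * n2) ^ r = n1 ^ r * n2 ^ r := Real.mul_rpow hn10 hn20
    have e2 : (n1 ^ r) ^ (2:ℕ) = n1 ^ (2 * r) := by
      rw [← Real.rpow_natCast (n1 ^ r) 2, ← Real.rpow_mul hn10]
      norm_num
      rw [mul_comm]
    have e3 : (n2 ^ r) ^ (2:ℕ) = n2 ^ (2 * r) := by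
      rw [← Real.rpow_natCast (n2 ^ r) 2, ← Real.rpow_mul hn20]
      norm_num
      rw [mul_comm]
    have amgm := two_mul_le_add_sq (n1 ^ r) (n2 ^ r)
    rw [e1]
    nlinarith [hF3a, hF3b, amgm, e2, e3]
  have hX1 : a ^ (2 * r) ≤ numRad (T * T) ^ r / 2 + (p + q) / 4 := by
    calc a ^ (2 * r) = (a ^ (2:ℕ)) ^ r := haX
    _ ≤ ((n1 * n2 + c) / 2) ^ r :=
        Real.rpow_le_rpow (by positivity) hbuz (by linarith)
    _ ≤ ((n1 * n2) ^ r + c ^ r) / 2 := avg_rpow' (by positivity) hc0 hr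
    _ ≤ ((p + q) / 2 + numRad (T * T) ^ r) / 2 := by
        have := Real.rpow_le_rpow hc0 hF2 (by linarith : (0:ℝ) ≤ r)
        linarith [hd]
    _ = numRad (T * T) ^ r / 2 + (p + q) / 4 := by ring
  have hcomb : a ^ (2 * r) ≤ (α / 2) * numRad (T * T) ^ r
      + ((α / 4) * p + (1 - 3 * α / 4) * q) := by
    obtain ⟨X, hX⟩ : ∃ X, X = a ^ (2 * r) := ⟨_, rfl⟩
    obtain ⟨W, hW⟩ : ∃ W, W = numRad (T * T) ^ r := ⟨_, rfl⟩
    rw [← hX, ← hW] at hX1 ⊢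
    rw [← hX] at hq0
    nlinarith [mul_le_mul_of_nonneg_left hX1 hα0,
      mul_le_mul_of_nonneg_left hq0 (by linarith : (0:ℝ) ≤ 1 - α)]
  calc a ^ (2 * r) ≤ (α / 2) * numRad (T * T) ^ r
      + ((α / 4) * p + (1 - 3 * α / 4) * q) := hcomb
  _ ≤ (α / 2) * numRad (T * T) ^ r + ‖B‖ := by linarith [hF5]

end Main

theorem stmt10 {H : Type*} [NormedAddCommGroup H] [InnerProductSpace ℂ H] [CompleteSpace H]
    (T : H →L[ℂ] H) (r : ℝ) (hr : 1 ≤ r) (α : ℝ) (hα0 : 0 ≤ α) (hα1 : α ≤ 1) :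
    numRad T ^ (2 * r) ≤
      (α / 2) * numRad (T * T) ^ r +
        ‖(α / 4) • opRPow (absOp T) (2 * r) +
          (1 - 3 * α / 4) • opRPow (absOp (ContinuousLinearMap.adjoint T)) (2 * r)‖ := by
  set M : ℝ := (α / 2) * numRad (T * T) ^ r +
        ‖(α / 4) • opRPow (absOp T) (2 * r) +
          (1 - 3 * α / 4) • opRPow (absOp (ContinuousLinearMap.adjoint T)) (2 * r)‖ with hM
  have hM0 : 0 ≤ M := by
    have h1 : 0 ≤ numRad (T * T) ^ r := Real.rpow_nonneg (numRad_nonneg' _) r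
    have h2 : (0:ℝ) ≤ α / 2 := by linarith
    positivity
  have h2r : (0:ℝ) < 2 * r := by linarith
  have hpt : ∀ x : H, ‖x‖ = 1 → ‖(inner ℂ (T x) x : ℂ)‖ ≤ M ^ (2 * r)⁻¹ := by
    intro x hx
    have h := pointwise_bound T r hr α hα0 hα1 hx
    rw [← hM] at h
    calc ‖(inner ℂ (T x) x : ℂ)‖ = (‖(inner ℂ (T x) x : ℂ)‖ ^ (2 * r)) ^ (2 * r)⁻¹ :=
          (Real.rpow_rpow_inv (norm_nonneg _) h2r.ne').symm
    _ ≤ M ^ (2 * r)⁻¹ := Real.rpow_le_rpow (Real.rpow_nonneg (norm_nonneg _) _) h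
          (by positivity)
  have hub : numRad T ≤ M ^ (2 * r)⁻¹ :=
    numRad_le' T (Real.rpow_nonneg hM0 _) hpt
  calc numRad T ^ (2 * r) ≤ (M ^ (2 * r)⁻¹) ^ (2 * r) :=
        Real.rpow_le_rpow (numRad_nonneg' T) hub h2r.le
  _ = M := Real.rpow_inv_rpow hM0 h2r.ne'
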